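/- A node of the information graph without a self-loop is visited at most once by each chain: if s ∈ U satisfies σ(s) ≠ s (where σ is the well-defined successor map), then for every j ∈ V there is at most one k ∈ ℕ with s(k,j) = s. Consequently the label set L(t,s) of such a node contains at most |V| elements, uniformly in t. -/
import Mathlib


/-- The reachability set `s(k,j) = {i : D i j ≤ k}`. -/
def reach {V : Type*} (D : V → V → ℕ∞) (k : ℕ) (j : V) : Set V :=
  {i | D i j ≤ (k : ℕ∞)}

/-- The node set of the information graph: `U = {s(k,j) : k ∈ ℕ, j ∈ V}`. -/
def infoNodes {V : Type*} (D : V → V → ℕ∞) : Set (Set V) :=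
  {s | ∃ (k : ℕ) (j : V), s = reach D k j}

/-- The label sets, defined recursively: `L(0,s) = {(i,0) : ρ(i) = s}` and
`L(t+1,s) = {(i,t+1) : ρ(i) = s} ∪ ⋃_{r : σ(r) = s} L(t,r)`. -/
def labelSet {V U₀ : Type*} (ρ : V → U₀) (σ : U₀ → U₀) : ℕ → U₀ → Set (V × ℕ)
  | 0, s => {p | p.2 = 0 ∧ ρ p.1 = s}
  | t + 1, s => {p | p.2 = t + 1 ∧ ρ p.1 = s} ∪
      ⋃ r ∈ {r : U₀ | σ r = s}, labelSet ρ σ t r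

lemma reach_mono {V : Type*} (D : V → V → ℕ∞) {k k' : ℕ} (h : k ≤ k') (j : V) :
    reach D k j ⊆ reach D k' j := fun i hi => by
  have : (k : ℕ∞) ≤ (k' : ℕ∞) := by exact_mod_cast h
  exact le_trans hi this

lemma labelSet_mem_iff {V U₀ : Type*} (ρ : V → U₀) (σ : U₀ → U₀) :
    ∀ (t : ℕ) (s : U₀) (p : V × ℕ),
      p ∈ labelSet ρ σ t s ↔ p.2 ≤ t ∧ σ^[t - p.2] (ρ p.1) = s := by
  intro t
  induction t with
  | zero =>
    intro s p
    simp only [labelSet, Set.mem_setOf_eq, Nat.le_zero]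
    constructor
    · rintro ⟨h1, h2⟩; exact ⟨h1, by simp [h1, h2]⟩
    · rintro ⟨h1, h2⟩; exact ⟨h1, by simpa [h1] using h2⟩
  | succ t ih =>
    intro s p
    simp only [labelSet, Set.mem_union, Set.mem_setOf_eq, Set.mem_iUnion, ih]
    constructor
    · rintro (⟨h1, h2⟩ | ⟨r, hr, h1, h2⟩)
      · exact ⟨by omega, by simp [h1, h2]⟩
      · refine ⟨by omega, ?_⟩
        have : t + 1 - p.2 = (t - p.2) + 1 := by omega
        rw [this, Function.iterate_succ_apply', h2, hr]
    · rintro ⟨h1, h2⟩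
      rcases Nat.lt_or_ge p.2 (t + 1) with h | h
      · right
        have hle : p.2 ≤ t := by omega
        have : t + 1 - p.2 = (t - p.2) + 1 := by omega
        rw [this, Function.iterate_succ_apply'] at h2
        exact ⟨σ^[t - p.2] (ρ p.1), h2, hle, rfl⟩
      · left
        have h1' : p.2 = t + 1 := by omega
        refine ⟨h1', ?_⟩
        simpa [h1'] using h2

/-- A node of the information graph without a self-loop is visited at most once
by each chain `k ↦ s(k,j)`; consequently its label set `L(t,s)` has at most
`|V|` elements, uniformly in `t`. -/
theorem no_selfloop_visited_once {V : Type*} [Fintype V] (D : V → V → ℕ∞)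
    (ha : ∀ i, D i i = 0)
    (hb : ∀ i ℓ j, D i j ≤ D i ℓ + D ℓ j)
    (hc : ∀ (k : ℕ) (i j : V),
      D i j ≤ (k : ℕ∞) + 1 ↔ ∃ ℓ, D i ℓ ≤ 1 ∧ D ℓ j ≤ (k : ℕ∞))
    (σ : ↥(infoNodes D) → ↥(infoNodes D))
    (hσ : ∀ (k : ℕ) (j : V),
      ((σ ⟨reach D k j, ⟨k, j, rfl⟩⟩ : ↥(infoNodes D)) : Set V) = reach D (k + 1) j)
    (ρ : V → ↥(infoNodes D))
    (hρ : ∀ j : V, ((ρ j : ↥(infoNodes D)) : Set V) = reach D 0 j) :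
    ∀ s : ↥(infoNodes D), σ s ≠ s →
      (∀ (j : V) (k k' : ℕ),
        reach D k j = (s : Set V) → reach D k' j = (s : Set V) → k = k') ∧
      ∀ t : ℕ, (labelSet ρ σ t s).ncard ≤ Fintype.card V := by
  -- σ applied to any element whose value is reach D k j:
  have hσ' : ∀ (u : ↥(infoNodes D)) (k : ℕ) (j : V), (u : Set V) = reach D k j →
      ((σ u : ↥(infoNodes D)) : Set V) = reach D (k + 1) j := by
    intro u k j hu
    have : u = ⟨reach D k j, ⟨k, j, rfl⟩⟩ := Subtype.ext hu
    rw [this]; exact hσ k j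
  -- iterates of σ on ρ i:
  have hiter : ∀ (m : ℕ) (i : V), ((σ^[m] (ρ i) : ↥(infoNodes D)) : Set V) = reach D m i := by
    intro m
    induction m with
    | zero => intro i; simpa using hρ i
    | succ m ih =>
      intro i
      rw [Function.iterate_succ_apply']
      exact hσ' _ m i (ih i)
  intro s hs
  have part1 : ∀ (j : V) (k k' : ℕ),
      reach D k j = (s : Set V) → reach D k' j = (s : Set V) → k = k' := by
    intro j k k' hk hk'
    by_contra hne
    -- wlog k < k'
    have key : ∀ a b : ℕ, a < b → reach D a j = (s : Set V) → reach D b j = (s : Set V) → False := by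
      intro a b hab h1 h2
      have hstep : reach D (a + 1) j = reach D a j := by
        apply Set.Subset.antisymm
        · calc reach D (a + 1) j ⊆ reach D b j := reach_mono D (by omega) j
            _ = reach D a j := by rw [h1, ← h2]
        · exact reach_mono D (by omega) j
      have : σ s = s := by
        apply Subtype.ext
        rw [hσ' s a j h1.symm, hstep, h1]
      exact hs this
    rcases Nat.lt_or_ge k k' with h | h
    · exact key k k' h hk hk'
    · exact key k' k (by omega) hk' hk
  refine ⟨part1, ?_⟩
  intro t
  have hinj : Set.InjOn Prod.fst (labelSet ρ σ t s) := by
    intro p hp q hq hpq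
    rw [labelSet_mem_iff] at hp hq
    obtain ⟨hp1, hp2⟩ := hp
    obtain ⟨hq1, hq2⟩ := hq
    have e1 : reach D (t - p.2) p.1 = (s : Set V) := by rw [← hiter, hp2]
    have e2 : reach D (t - q.2) p.1 = (s : Set V) := by rw [← hiter, hpq, hq2]
    have := part1 p.1 _ _ e1 e2
    have : p.2 = q.2 := by omega
    exact Prod.ext hpq this
  calc (labelSet ρ σ t s).ncard ≤ (Set.univ : Set V).ncard :=
        Set.ncard_le_ncard_of_injOn Prod.fst (fun _ _ => Set.mem_univ _) hinj Set.finite_univ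
    _ = Fintype.card V := by simp [Set.ncard_univ, Nat.card_eq_fintype_card]
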